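/- For every triple of infinite regular cardinals μ < λ < κ, for every stationary set S ⊆ E^κ_λ, and for every λ-bounded C-sequence ⟨C_δ : δ ∈ S⟩, for every club D ⊆ κ there exists δ ∈ S such that sup(C_δ ∩ D ∩ E^κ_μ) = δ. -/

import Mathlib

open Set Ordinal

noncomputable section

abbrev O : Type 1 := Ordinal.{0}

/-- `ssup A` is the strict supremum of a set of ordinals. -/
def ssup (A : Set O) : O := sSup ((· + 1) '' A)

/-- `acc⁺(A)`: accumulation points below the strict sup. -/
def accP (A : Set O) : Set O := {α | α < ssup A ∧ 0 < α ∧ sSup (A ∩ Iio α) = α}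

def accOf (A : Set O) : Set O := A ∩ accP A

def nacc (A : Set O) : Set O := A \ accOf A

def clOf (A : Set O) : Set O := A ∪ accP A

/-- order type of a set of ordinals -/
def otp (A : Set O) : Ordinal.{1} := Ordinal.type (Subrel ((· < ·) : O → O → Prop) (· ∈ A))

/-- lift a small ordinal one universe up -/
def olift (a : O) : Ordinal.{1} := Ordinal.lift.{1} a

/-- `suc_σ(A)`: elements of `A` whose index in `A` is `j+1` for some `j < σ`. -/
def sucSet (σ : Ordinal.{1}) (A : Set O) : Set O := {β | β ∈ A ∧ ∃ j < σ, otp (A ∩ Iio β) = j + 1}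

def UnbIn (A : Set O) (δ : O) : Prop := ∀ α < δ, ∃ β ∈ A, α < β ∧ β < δ

def IsClubIn (C : Set O) (δ : O) : Prop :=
  C ⊆ Iio δ ∧ UnbIn C δ ∧ ∀ α < δ, 0 < α → sSup (C ∩ Iio α) = α → α ∈ C

def IsStatIn (S : Set O) (δ : O) : Prop :=
  S ⊆ Iio δ ∧ ∀ D, IsClubIn D δ → (S ∩ D).Nonempty

def Ecof (κ : O) (lam : Cardinal.{0}) : Set O := {δ | δ < κ ∧ δ.cof = lam}

def PhiSup (B x : Set O) : Set O :=
  if sSup (x ∩ B) = sSup x then clOf (x ∩ B) else x \ Iio (sSup (x ∩ B))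

def PhiD (D x : Set O) : Set O :=
  if sSup (D ∩ Iio (sSup x)) = sSup x then
    {γ | ∃ η ∈ x, sInf D < η ∧ γ = sSup (D ∩ Iio η)}
  else x \ Iio (sSup (D ∩ Iio (sSup x)))

/-- `cf(δ)`-additive proper ideal on `δ` extending the bounded ideal. -/
def GoodIdeal (δ : O) (J : Set (Set O)) : Prop :=
  (∀ A B : Set O, A ⊆ B → B ∈ J → A ∈ J) ∧
  (Iio δ ∉ J) ∧
  (∀ B : Set O, B ⊆ Iio δ → sSup B < δ → B ∈ J) ∧
  (∀ ξ < (Ordinal.cof δ).ord, ∀ f : O → Set O, (∀ i < ξ, f i ∈ J) → (⋃ i ∈ Iio ξ, f i) ∈ J)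

lemma my_sSup_inter_Iio_le (A : Set O) (α : O) : sSup (A ∩ Iio α) ≤ α :=
  csSup_le' (fun _ hx => hx.2.le)

lemma my_sSup_eq_of_unbdd {A : Set O} {δ : O} (hA : A ⊆ Iio δ)
    (h : ∀ β < δ, ∃ α ∈ A, β < α) (h0 : 0 < δ) : sSup A = δ := by
  refine le_antisymm (csSup_le' fun x hx => (hA hx).le) ?_
  by_contra h'
  push_neg at h'
  obtain ⟨α, hαA, hα⟩ := h _ h'
  exact absurd (le_csSup ⟨δ, fun x hx => (hA hx).le⟩ hαA) (not_le.2 hα)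

lemma my_exists_lt_of_sSup_eq {A : Set O} {α β : O} (h : sSup A = α) (hβ : β < α) :
    ∃ x ∈ A, β < x := by
  have hne : A.Nonempty := by
    rcases A.eq_empty_or_nonempty with rfl | hne
    · rw [csSup_empty] at h; exact absurd (h ▸ hβ) (by simp)
    · exact hne
  exact exists_lt_of_lt_csSup hne (h ▸ hβ)

/-- intersection of two clubs in `δ` is a club in `δ`, when `cf(δ)` is uncountable. -/
lemma my_club_inter {A B : Set O} {δ : O} (hδ : Cardinal.aleph0 < δ.cof)
    (hA : IsClubIn A δ) (hB : IsClubIn B δ) : IsClubIn (A ∩ B) δ := by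
  have hsub : A ∩ B ⊆ Iio δ := fun x hx => hA.1 hx.1
  refine ⟨hsub, ?_, ?_⟩
  · intro β hβ
    have step : ∀ x < δ, ∃ y, y < δ ∧ x < y ∧ y ∈ B ∧ ∃ a ∈ A, x < a ∧ a ≤ y := by
      intro x hx
      obtain ⟨a, haA, hxa, haδ⟩ := hA.2.1 x hx
      obtain ⟨b, hbB, hab, hbδ⟩ := hB.2.1 a haδ
      exact ⟨b, hbδ, hxa.trans hab, hbB, a, haA, hxa, hab.le⟩
    choose! y hy1 hy2 hy3 hy4 using step
    set f : ℕ → O := fun n => Nat.recAux β (fun _ p => y p) n with hf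
    have hf0 : f 0 = β := rfl
    have hfs : ∀ n, f (n + 1) = y (f n) := fun n => rfl
    have hfδ : ∀ n, f n < δ := by
      intro n
      induction n with
      | zero => exact hβ
      | succ n ih => rw [hfs]; exact hy1 _ ih
    have hmono : ∀ n, f n < f (n + 1) := by
      intro n; rw [hfs]; exact hy2 _ (hfδ n)
    set γ := ⨆ n, f n with hγ
    have hγδ : γ < δ := by
      refine Ordinal.iSup_lt_ord ?_ hfδ
      rw [Cardinal.mk_nat]; exact hδ
    have hle : ∀ n, f n ≤ γ := fun n => le_ciSup (Ordinal.bddAbove_range f) n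
    have hltγ : ∀ n, f n < γ := fun n => lt_of_lt_of_le (hmono n) (hle (n + 1))
    have hβγ : β < γ := hf0 ▸ hltγ 0
    have h0γ : 0 < γ := lt_of_le_of_lt (zero_le (a := β)) hβγ
    have hbddA : BddAbove (A ∩ Iio γ) := ⟨γ, fun x hx => hx.2.le⟩
    have hbddB : BddAbove (B ∩ Iio γ) := ⟨γ, fun x hx => hx.2.le⟩
    have hsupA : sSup (A ∩ Iio γ) = γ := by
      refine le_antisymm (my_sSup_inter_Iio_le _ _) ?_
      rw [hγ]
      refine ciSup_le fun n => ?_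
      obtain ⟨a, haA, hna, hay⟩ := hy4 (f n) (hfδ n)
      have : a < γ := lt_of_le_of_lt (le_trans hay (hfs n ▸ le_rfl)) (hfs n ▸ hltγ (n + 1))
      exact le_trans hna.le (le_csSup hbddA ⟨haA, this⟩)
    have hsupB : sSup (B ∩ Iio γ) = γ := by
      refine le_antisymm (my_sSup_inter_Iio_le _ _) ?_
      rw [hγ]
      refine ciSup_le fun n => ?_
      have hyB : f (n + 1) ∈ B := by rw [hfs]; exact hy3 _ (hfδ n)
      exact le_trans (hmono n).le (le_csSup hbddB ⟨hyB, hltγ (n + 1)⟩)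
    exact ⟨γ, ⟨hA.2.2 γ hγδ h0γ hsupA, hB.2.2 γ hγδ h0γ hsupB⟩, hβγ, hγδ⟩
  · intro α hα h0 hsup
    have hne : (A ∩ B ∩ Iio α).Nonempty := by
      rcases (A ∩ B ∩ Iio α).eq_empty_or_nonempty with he | hne
      · rw [he, csSup_empty] at hsup; exact absurd (hsup ▸ h0) (by simp)
      · exact hne
    have hAα : sSup (A ∩ Iio α) = α :=
      le_antisymm (my_sSup_inter_Iio_le _ _) (le_trans (le_of_eq hsup.symm)
        (csSup_le_csSup ⟨α, fun x hx => hx.2.le⟩ hne (fun x hx => ⟨hx.1.1, hx.2⟩)))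
    have hBα : sSup (B ∩ Iio α) = α :=
      le_antisymm (my_sSup_inter_Iio_le _ _) (le_trans (le_of_eq hsup.symm)
        (csSup_le_csSup ⟨α, fun x hx => hx.2.le⟩ hne (fun x hx => ⟨hx.1.2, hx.2⟩)))
    exact ⟨hA.2.2 α hα h0 hAα, hB.2.2 α hα h0 hBα⟩

/-- Key lemma: in a closed unbounded subset of `δ`, above any `β < δ`, there is an
accumulation point of the set of cofinality exactly `μ`, whenever `μ.ord < cf(δ)`. -/
lemma my_exists_cof_point {E : Set O} {δ : O} {μ : Cardinal.{0}}
    (hμ : μ.IsRegular) (hμδ : μ.ord < δ.cof.ord)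
    (hEunb : UnbIn E δ)
    (hEcl : ∀ α < δ, 0 < α → sSup (E ∩ Iio α) = α → α ∈ E)
    {β : O} (hβ : β < δ) :
    ∃ α, α ∈ E ∧ β < α ∧ α < δ ∧ sSup (E ∩ Iio α) = α ∧ α.cof = μ := by
  set F : Set O := (E ∩ Ioi β) ∪ Ici δ with hF
  have hFunb : ¬ BddAbove F := by
    rintro ⟨b, hb⟩
    have hmem : max b δ + 1 ∈ F := Or.inr (le_trans (le_max_right b δ) (le_of_lt (lt_add_one _)))
    exact absurd (hb hmem) (not_le.2 (lt_of_le_of_lt (le_max_left b δ) (lt_add_one _)))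
  have hFcl : IsClosed F := by
    rw [Ordinal.isClosed_iff_iSup]
    intro ι hι f hf
    haveI := hι
    by_cases h1 : ∃ i, δ ≤ f i
    · obtain ⟨i, hi⟩ := h1
      exact Or.inr (le_trans hi (le_ciSup (Ordinal.bddAbove_range f) i))
    · push_neg at h1
      have hf' : ∀ i, f i ∈ E ∩ Ioi β := fun i => (hf i).resolve_right (not_le.2 (h1 i))
      by_cases h2 : ∃ i, ⨆ j, f j ≤ f i
      · obtain ⟨i, hi⟩ := h2
        have : ⨆ j, f j = f i := le_antisymm hi (le_ciSup (Ordinal.bddAbove_range f) i)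
        rw [this]; exact Or.inl (hf' i)
      · push_neg at h2
        set s := ⨆ j, f j with hs
        rcases le_or_gt δ s with hδs | hsδ
        · exact Or.inr hδs
        · refine Or.inl ⟨?_, ?_⟩
          · obtain ⟨i⟩ := hι
            refine hEcl s hsδ ?_ ?_
            · exact lt_of_le_of_lt (zero_le (a := f i)) (h2 i)
            · refine le_antisymm (my_sSup_inter_Iio_le _ _) ?_
              refine ciSup_le fun i => le_csSup ⟨s, fun x hx => hx.2.le⟩ ⟨(hf' i).1, h2 i⟩
          · obtain ⟨i⟩ := hι
            exact lt_trans (hf' i).2 (h2 i)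
  set e := enumOrd F with he
  have hnorm : Order.IsNormal e := (enumOrd_isNormal_iff_isClosed hFunb).2 hFcl
  have hμlim : Order.IsSuccLimit (μ.ord) := Cardinal.isSuccLimit_ord hμ.aleph0_le
  have hμcof : μ < δ.cof := Cardinal.ord_lt_ord.1 hμδ
  have claim : ∀ i, i ≤ μ.ord → e i < δ := by
    intro i
    induction i using Ordinal.induction with
    | h i IH =>
      intro hi
      rcases Ordinal.zero_or_succ_or_isSuccLimit i with rfl | ⟨j, rfl⟩ | hlim
      · obtain ⟨x, hxE, hβx, hxδ⟩ := hEunb β hβ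
        have : e 0 ≤ x := by
          rw [he, enumOrd_zero]
          exact csInf_le' (Or.inl ⟨hxE, hβx⟩)
        exact lt_of_le_of_lt this hxδ
      · have hj : e j < δ := IH j (Order.lt_succ j) ((Order.lt_succ j).le.trans hi)
        obtain ⟨x, hxE, hmx, hxδ⟩ := hEunb (max (e j) β) (max_lt hj hβ)
        have hx : x ∈ F := Or.inl ⟨hxE, lt_of_le_of_lt (le_max_right _ _) hmx⟩
        have : e (Order.succ j) ≤ x :=
          enumOrd_succ_le hFunb hx (lt_of_le_of_lt (le_max_left _ _) hmx)
        exact lt_of_le_of_lt this hxδ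
      · have hcard : i.card < δ.cof :=
          lt_of_le_of_lt (by simpa [Cardinal.card_ord] using Ordinal.card_le_card hi) hμcof
        have hb : Ordinal.bsup i (fun j _ => e j) < δ :=
          Ordinal.bsup_lt_ord hcard fun j hj => IH j hj (hj.le.trans hi)
        have : e i ≤ Ordinal.bsup i (fun j _ => e j) :=
          (hnorm.le_iff_forall_le hlim).2 fun j hj => Ordinal.le_bsup _ j hj
        exact lt_of_le_of_lt this hb
  set α := e μ.ord with hα
  have hαδ : α < δ := claim _ le_rfl
  have hαF : α ∈ F := enumOrd_mem hFunb μ.ord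
  have hαE : α ∈ E ∩ Ioi β := hαF.resolve_right (not_le.2 hαδ)
  have hcof : α.cof = μ := by
    rw [hα, he, Ordinal.cof_map_of_isNormal hnorm hμlim, Cardinal.IsRegular.cof_eq hμ]
  have hsup : sSup (E ∩ Iio α) = α := by
    refine le_antisymm (my_sSup_inter_Iio_le _ _) ?_
    refine (hnorm.le_iff_forall_le hμlim).2 fun j hj => ?_
    have hejδ : e j < δ := claim j hj.le
    have hejE : e j ∈ E := ((enumOrd_mem hFunb j).resolve_right (not_le.2 hejδ)).1
    have hejα : e j < α := hnorm.strictMono hj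
    exact le_csSup ⟨α, fun x hx => hx.2.le⟩ ⟨hejE, hejα⟩
  exact ⟨α, hαE.1, hαE.2, hαδ, hsup, hcof⟩

/-- any λ-bounded C-sequence over a stationary `S ⊆ E^κ_λ` witnesses
`CG_λ(S, E^κ_μ, -)` for regular `μ < λ < κ`. -/
theorem statement0 (μ lam κ : Cardinal.{0})
    (hμ : μ.IsRegular) (hlam : lam.IsRegular) (hκ : κ.IsRegular)
    (hml : μ < lam) (hlk : lam < κ)
    (S : Set O) (hSsub : S ⊆ Ecof κ.ord lam) (hS : IsStatIn S κ.ord)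
    (C : O → Set O)
    (hC : ∀ δ ∈ S, IsClubIn (C δ) δ ∧ otp (C δ) ≤ olift lam.ord)
    (D : Set O) (hD : IsClubIn D κ.ord) :
    ∃ δ ∈ S, sSup (C δ ∩ D ∩ Ecof κ.ord μ) = δ := by
  have hκ0 : Cardinal.aleph0 < κ := lt_of_le_of_lt hlam.aleph0_le hlk
  have hκcof : κ.ord.cof = κ := hκ.cof_eq
  -- the club of accumulation points of D
  set T : Set O := {α | α < κ.ord ∧ 0 < α ∧ sSup (D ∩ Iio α) = α} with hT
  have hTclub : IsClubIn T κ.ord := by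
    refine ⟨fun α hα => hα.1, ?_, ?_⟩
    · intro β hβ
      obtain ⟨α, hαD, hβα, hακ, hsup, _⟩ :=
        my_exists_cof_point Cardinal.isRegular_aleph0
          (by rw [hκcof]; exact Cardinal.ord_lt_ord.2 hκ0) hD.2.1 hD.2.2 hβ
      exact ⟨α, ⟨hακ, lt_of_le_of_lt (zero_le (a := β)) hβα, hsup⟩, hβα, hακ⟩
    · intro α hακ h0 hsup
      refine ⟨hακ, h0, le_antisymm (my_sSup_inter_Iio_le _ _) ?_⟩
      by_contra h'
      push_neg at h'
      obtain ⟨t, htT, htgt⟩ := my_exists_lt_of_sSup_eq hsup h'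
      obtain ⟨d, hdD, hdgt⟩ := my_exists_lt_of_sSup_eq htT.1.2.2 htgt
      have : d ≤ sSup (D ∩ Iio α) :=
        le_csSup ⟨α, fun x hx => hx.2.le⟩ ⟨hdD.1, mem_Iio.2 (lt_trans (mem_Iio.1 hdD.2) (mem_Iio.1 htT.2))⟩
      exact absurd (lt_of_lt_of_le hdgt this) (lt_irrefl _)
  obtain ⟨δ, hδS, hδT⟩ := hS.2 T hTclub
  have hδE := hSsub hδS
  have hδκ : δ < κ.ord := hδE.1
  have hδcof : δ.cof = lam := hδE.2
  have hcofδ_big : Cardinal.aleph0 < δ.cof := by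
    rw [hδcof]; exact lt_of_le_of_lt hμ.aleph0_le hml
  have hD' : IsClubIn (D ∩ Iio δ) δ := by
    refine ⟨fun x hx => hx.2, ?_, ?_⟩
    · intro b hb
      obtain ⟨d, hd, hbd⟩ := my_exists_lt_of_sSup_eq hδT.2.2 hb
      exact ⟨d, hd, hbd, hd.2⟩
    · intro a haδ h0 hsup
      have heq : D ∩ Iio δ ∩ Iio a = D ∩ Iio a := by
        ext x
        simp only [mem_inter_iff, mem_Iio]
        exact ⟨fun h => ⟨h.1.1, h.2⟩, fun h => ⟨⟨h.1, h.2.trans haδ⟩, h.2⟩⟩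
      exact ⟨hD.2.2 a (haδ.trans hδκ) h0 (heq ▸ hsup), haδ⟩
  have hCδ := (hC δ hδS).1
  have hint : IsClubIn (C δ ∩ (D ∩ Iio δ)) δ := my_club_inter hcofδ_big hCδ hD'
  refine ⟨δ, hδS, ?_⟩
  refine my_sSup_eq_of_unbdd ?_ ?_ hδT.2.1
  · intro x hx
    exact hCδ.1 hx.1.1
  · intro b hb
    obtain ⟨α, hαE, hbα, hαδ, _, hαcof⟩ :=
      my_exists_cof_point hμ
        (by rw [hδcof]; exact Cardinal.ord_lt_ord.2 hml) hint.2.1 hint.2.2 hb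
    exact ⟨α, ⟨⟨hαE.1, hαE.2.1⟩, hαδ.trans hδκ, hαcof⟩, hbα⟩
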